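/- Let k be a field of characteristic zero and let H be a 6-dimensional k-algebra of the form H = S ⊕ J (vector space direct sum) where S ≅ k × M_2(k) is a subalgebra, J = k·x is a 1-dimensional two-sided ideal with J² = 0, x·s = s·x = ε̄(s)·x for the unique algebra map ε̄: S → k, and ε̄(x) = 0. Suppose Δ: H → H ⊗ H is a k-algebra homomorphism with (ε ⊗ id)∘Δ = id = (id ⊗ ε)∘Δ, where ε: H → k is the algebra map extending ε̄ with ε(x) = 0. Then no such Δ exists, because writing Δ(x) in the basis {1, E_{ij}, x} the counit conditions force Δ(x) = 1⊗x + Σ E_{ij} ⊗ (Σ λ^{ij}_{st} E_{st} + μ_{ij} x) + x ⊗ (1 + Σ γ_{ij}E_{ij} + θ x), and then Δ(x)² contains the nonzero term 2·x⊗x plus terms in span{E_{ij}⊗E_{st}}, contradicting Δ(x²) = 0. -/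

import Mathlib

open TensorProduct

/-- Let `H` be a 6-dimensional algebra of the form `S ⊕ J` where
`S ≅ k × M₂(k)` is a subalgebra (embedded by `ι`), `J = k·x` is a 1-dimensional
ideal with `x² = 0` and `x·ι(s) = ι(s)·x = ε̄(s)·x` where `ε̄` is the projection
onto the factor `k`, and `ε : H → k` is the algebra map with `ε∘ι = ε̄`,
`ε(x) = 0`.  Then there is no algebra map `Δ : H → H ⊗ H` admitting `ε` as a
counit. -/
theorem stmt12 (k : Type*) [Field k] [CharZero k]
    (H : Type*) [Ring H] [Algebra k H] (hdim : Module.finrank k H = 6)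
    (ι : (k × Matrix (Fin 2) (Fin 2) k) →ₐ[k] H) (hι : Function.Injective ι)
    (x : H) (hx0 : x ≠ 0) (hxx : x * x = 0)
    (hxs : ∀ s : k × Matrix (Fin 2) (Fin 2) k, x * ι s = s.1 • x)
    (hsx : ∀ s : k × Matrix (Fin 2) (Fin 2) k, ι s * x = s.1 • x)
    (hspan : Submodule.span k (Set.range ι ∪ {x}) = ⊤)
    (ε : H →ₐ[k] k) (hεx : ε x = 0)
    (hει : ∀ s : k × Matrix (Fin 2) (Fin 2) k, ε (ι s) = s.1) :
    ¬ ∃ Δ : H →ₐ[k] H ⊗[k] H,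
        (∀ h : H, (Algebra.TensorProduct.lid k H)
            ((Algebra.TensorProduct.map ε (AlgHom.id k H)) (Δ h)) = h) ∧
        (∀ h : H, (Algebra.TensorProduct.rid k k H)
            ((Algebra.TensorProduct.map (AlgHom.id k H) ε) (Δ h)) = h) := by
  rintro ⟨Δ, h1, h2⟩
  -- the image of ι as a submodule
  set M : Submodule k H := LinearMap.range ι.toLinearMap with hM
  have hspan_range : Submodule.span k (Set.range ⇑ι) = M := by
    apply le_antisymm
    · apply Submodule.span_le.2
      rintro _ ⟨s, rfl⟩; exact ⟨s, rfl⟩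
    · rintro _ ⟨s, rfl⟩; exact Submodule.subset_span ⟨s, rfl⟩
  -- decomposition of any element of H
  have hdecomp : ∀ h : H, ∃ (s : k × Matrix (Fin 2) (Fin 2) k) (c : k),
      h = ι s + c • x := by
    intro h
    have hh : h ∈ Submodule.span k (Set.range ⇑ι ∪ {x}) := by rw [hspan]; trivial
    rw [Submodule.span_union, hspan_range, Submodule.mem_sup] at hh
    obtain ⟨a, ⟨s, rfl⟩, b, hb, rfl⟩ := hh
    obtain ⟨c, rfl⟩ := Submodule.mem_span_singleton.1 hb
    exact ⟨s, c, rfl⟩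
  -- x is not in the image of ι
  have hxM : x ∉ M := by
    intro hmem
    have hMtop : M = ⊤ := by
      rw [eq_top_iff, ← hspan, Submodule.span_union, hspan_range]
      exact sup_le le_rfl ((Submodule.span_singleton_le_iff_mem x M).mpr hmem)
    have h5 : Module.finrank k ↥M = 5 := by
      rw [LinearMap.finrank_range_of_inj hι]
      simp [Module.finrank_prod, Module.finrank_matrix]
    rw [hMtop, finrank_top, hdim] at h5
    norm_num at h5
  -- a linear functional φ with φ x = 1 and φ vanishing on the image of ι
  obtain ⟨φ, hφx, hφM⟩ : ∃ φ : H →ₗ[k] k, φ x = 1 ∧ ∀ s, φ (ι s) = 0 := by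
    set v : H ⧸ M := M.mkQ x with hv
    have hvne : v ≠ 0 := by
      simpa [hv, Submodule.mkQ_apply, Submodule.Quotient.mk_eq_zero] using hxM
    have hinj : LinearMap.ker (LinearMap.toSpanSingleton k (H ⧸ M) v) = ⊥ := by
      rw [LinearMap.ker_eq_bot]
      intro a b hab
      simp only [LinearMap.toSpanSingleton_apply] at hab
      have h' : (a - b) • v = 0 := by rw [sub_smul, hab, sub_self]
      rcases smul_eq_zero.1 h' with h | h
      · exact sub_eq_zero.1 h
      · exact absurd h hvne
    obtain ⟨g, hg⟩ := LinearMap.exists_leftInverse_of_injective _ hinj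
    refine ⟨g ∘ₗ M.mkQ, ?_, ?_⟩
    · have := congrArg (fun f => f (1 : k)) hg
      simpa [LinearMap.toSpanSingleton, hv] using this
    · intro s
      have hz : M.mkQ (ι s) = 0 := by
        rw [Submodule.mkQ_apply, Submodule.Quotient.mk_eq_zero]
        exact ⟨s, rfl⟩
      simp only [LinearMap.coe_comp, Function.comp_apply, hz, map_zero]
  -- the projection onto ker ε
  set P : H →ₗ[k] H :=
    { toFun := fun h => h - ε h • (1 : H)
      map_add' := fun a b => by rw [map_add, add_smul]; abel
      map_smul' := fun c a => by
        simp only [map_smul, RingHom.id_apply, smul_sub, smul_smul, smul_eq_mul] } with hPdef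
  have hP : ∀ h : H, P h = h - ε h • 1 := fun _ => rfl
  -- elements of ker ε annihilate x
  have hPx : ∀ h : H, P h * x = 0 := by
    intro h
    obtain ⟨s, c, rfl⟩ := hdecomp h
    rw [hP]
    simp only [map_add, map_smul, hει, hεx, smul_eq_mul, mul_zero, add_zero]
    rw [sub_mul, add_mul, smul_mul_assoc, smul_mul_assoc, hsx, hxx, one_mul,
      smul_zero, add_zero, sub_self]
  have hxP : ∀ h : H, x * P h = 0 := by
    intro h
    obtain ⟨s, c, rfl⟩ := hdecomp h
    rw [hP]
    simp only [map_add, map_smul, hει, hεx, smul_eq_mul, mul_zero, add_zero]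
    rw [mul_sub, mul_add, mul_smul_comm, mul_smul_comm, hxs, hxx, mul_one,
      smul_zero, add_zero, sub_self]
  -- products of two elements of ker ε lie in the image of ι
  have hPP : ∀ g h : H, ∃ s, P g * P h = ι s := by
    intro g h
    obtain ⟨s, c, rfl⟩ := hdecomp g
    obtain ⟨t, d, rfl⟩ := hdecomp h
    have key : ∀ (u : k × Matrix (Fin 2) (Fin 2) k) (e : k),
        P (ι u + e • x) = ι (u - u.1 • 1) + e • x := by
      intro u e
      rw [hP, map_sub, map_smul, map_one]
      simp only [map_add, map_smul, hει, hεx, smul_eq_mul, mul_zero, add_zero]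
      abel
    rw [key, key]
    refine ⟨(s - s.1 • 1) * (t - t.1 • 1), ?_⟩
    have h1' : (s - s.1 • (1 : k × Matrix (Fin 2) (Fin 2) k)).1 = 0 := by
      simp
    have h2' : (t - t.1 • (1 : k × Matrix (Fin 2) (Fin 2) k)).1 = 0 := by
      simp
    rw [add_mul, mul_add, mul_add, map_mul, smul_mul_assoc, mul_smul_comm,
      mul_smul_comm, smul_mul_assoc, hsx, hxs, h1', h2', hxx]
    simp
  -- the two counit maps as linear maps
  set L1 : H ⊗[k] H →ₗ[k] H :=
    (Algebra.TensorProduct.lid k H).toLinearMap ∘ₗ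
      (Algebra.TensorProduct.map ε (AlgHom.id k H)).toLinearMap with hL1def
  set L2 : H ⊗[k] H →ₗ[k] H :=
    (Algebra.TensorProduct.rid k k H).toLinearMap ∘ₗ
      (Algebra.TensorProduct.map (AlgHom.id k H) ε).toLinearMap with hL2def
  have hL1 : ∀ a b : H, L1 (a ⊗ₜ[k] b) = ε a • b := by
    intro a b; simp [hL1def]
  have hL2 : ∀ a b : H, L2 (a ⊗ₜ[k] b) = ε b • a := by
    intro a b; simp [hL2def]
  -- the key identity for map P P
  have hkeymaps : TensorProduct.map P P =
      LinearMap.id - (TensorProduct.mk k H H 1) ∘ₗ L1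
        - ((TensorProduct.mk k H H).flip 1) ∘ₗ L2
        + (LinearMap.toSpanSingleton k (H ⊗[k] H) ((1 : H) ⊗ₜ[k] (1 : H))) ∘ₗ
            (ε.toLinearMap ∘ₗ L2) := by
    apply TensorProduct.ext'
    intro a b
    simp only [TensorProduct.map_tmul, LinearMap.add_apply, LinearMap.sub_apply,
      LinearMap.id_apply, LinearMap.coe_comp, Function.comp_apply, hL1 a b, hL2 a b,
      TensorProduct.mk_apply, LinearMap.flip_apply, LinearMap.toSpanSingleton_apply,
      AlgHom.toLinearMap_apply, map_smul, smul_eq_mul, hP]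
    rw [TensorProduct.sub_tmul, TensorProduct.tmul_sub, TensorProduct.tmul_sub]
    simp only [TensorProduct.smul_tmul, TensorProduct.tmul_smul, smul_smul]
    module
  have hkey : ∀ u : H ⊗[k] H, TensorProduct.map P P u
      = u - 1 ⊗ₜ[k] (L1 u) - (L2 u) ⊗ₜ[k] 1 + ε (L2 u) • ((1 : H) ⊗ₜ[k] (1 : H)) := by
    intro u
    rw [hkeymaps]
    simp
  -- counit conditions applied to Δ x
  have hL1Δ : L1 (Δ x) = x := by rw [hL1def]; exact h1 x
  have hL2Δ : L2 (Δ x) = x := by rw [hL2def]; exact h2 x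
  have hΔx : Δ x = TensorProduct.map P P (Δ x) + 1 ⊗ₜ[k] x + x ⊗ₜ[k] 1 := by
    rw [hkey (Δ x), hL1Δ, hL2Δ, hεx, zero_smul, add_zero]
    abel
  -- vanishing lemmas for products with x-tensors
  have hA : ∀ v : H ⊗[k] H, TensorProduct.map P P v * ((1 : H) ⊗ₜ[k] x) = 0 := by
    intro v
    induction v using TensorProduct.induction_on with
    | zero => simp
    | tmul a b =>
        rw [TensorProduct.map_tmul, Algebra.TensorProduct.tmul_mul_tmul, hPx b,
          TensorProduct.tmul_zero]
    | add u1 u2 ih1 ih2 => rw [map_add, add_mul, ih1, ih2, add_zero]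
  have hB : ∀ v : H ⊗[k] H, TensorProduct.map P P v * (x ⊗ₜ[k] (1 : H)) = 0 := by
    intro v
    induction v using TensorProduct.induction_on with
    | zero => simp
    | tmul a b =>
        rw [TensorProduct.map_tmul, Algebra.TensorProduct.tmul_mul_tmul, hPx a,
          TensorProduct.zero_tmul]
    | add u1 u2 ih1 ih2 => rw [map_add, add_mul, ih1, ih2, add_zero]
  have hC : ∀ v : H ⊗[k] H, ((1 : H) ⊗ₜ[k] x) * TensorProduct.map P P v = 0 := by
    intro v
    induction v using TensorProduct.induction_on with
    | zero => simp
    | tmul a b =>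
        rw [TensorProduct.map_tmul, Algebra.TensorProduct.tmul_mul_tmul, hxP b,
          TensorProduct.tmul_zero]
    | add u1 u2 ih1 ih2 => rw [map_add, mul_add, ih1, ih2, add_zero]
  have hD : ∀ v : H ⊗[k] H, (x ⊗ₜ[k] (1 : H)) * TensorProduct.map P P v = 0 := by
    intro v
    induction v using TensorProduct.induction_on with
    | zero => simp
    | tmul a b =>
        rw [TensorProduct.map_tmul, Algebra.TensorProduct.tmul_mul_tmul, hxP a,
          TensorProduct.zero_tmul]
    | add u1 u2 ih1 ih2 => rw [map_add, mul_add, ih1, ih2, add_zero]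
  -- the functional φ ⊗ φ
  set T : H ⊗[k] H →ₗ[k] k :=
    (TensorProduct.lid k k).toLinearMap ∘ₗ TensorProduct.map φ φ with hTdef
  have hTtmul : ∀ a b : H, T (a ⊗ₜ[k] b) = φ a * φ b := by
    intro a b; simp [hTdef, smul_eq_mul]
  have hT0 : ∀ v v' : H ⊗[k] H,
      T (TensorProduct.map P P v * TensorProduct.map P P v') = 0 := by
    intro v v'
    induction v using TensorProduct.induction_on with
    | zero => simp
    | tmul a b =>
        induction v' using TensorProduct.induction_on with
        | zero => simp
        | tmul a' b' =>
            obtain ⟨s, hs⟩ := hPP a a'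
            rw [TensorProduct.map_tmul, TensorProduct.map_tmul,
              Algebra.TensorProduct.tmul_mul_tmul, hTtmul, hs, hφM, zero_mul]
        | add u1 u2 ih1 ih2 =>
            rw [map_add, mul_add, map_add, ih1, ih2, add_zero]
    | add u1 u2 ih1 ih2 =>
        rw [map_add, add_mul, map_add, ih1, ih2, add_zero]
  -- introduce an opaque name for map P P (Δ x)
  obtain ⟨w, hw⟩ : ∃ w : H ⊗[k] H, w = TensorProduct.map P P (Δ x) := ⟨_, rfl⟩
  have hΔw : Δ x = w + 1 ⊗ₜ[k] x + x ⊗ₜ[k] 1 := by rw [hw]; exact hΔx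
  have hAw : w * ((1 : H) ⊗ₜ[k] x) = 0 := by rw [hw]; exact hA _
  have hBw : w * (x ⊗ₜ[k] (1 : H)) = 0 := by rw [hw]; exact hB _
  have hCw : ((1 : H) ⊗ₜ[k] x) * w = 0 := by rw [hw]; exact hC _
  have hDw : (x ⊗ₜ[k] (1 : H)) * w = 0 := by rw [hw]; exact hD _
  have hTw : T (w * w) = 0 := by rw [hw]; exact hT0 _ _
  -- expand Δ x * Δ x
  have hsq : (0 : H ⊗[k] H) = w * w + x ⊗ₜ[k] x + x ⊗ₜ[k] x := by
    have e0 : (0 : H ⊗[k] H) = Δ x * Δ x := by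
      rw [← map_mul, hxx, map_zero]
    rw [e0, hΔw]
    simp only [add_mul, mul_add, hAw, hBw, hCw, hDw,
      Algebra.TensorProduct.tmul_mul_tmul, one_mul, mul_one, hxx,
      TensorProduct.tmul_zero, TensorProduct.zero_tmul, add_zero, zero_add]
  -- apply T to get a contradiction
  have hcontra := congrArg T hsq
  rw [map_zero, map_add, map_add, hTw, hTtmul, hφx, mul_one, zero_add] at hcontra
  norm_num at hcontra
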